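/- In a (CQR)_n manifold with concircular fundamental vector A (∇_s A_i = A_s A_i + γ g_{si}) with γ ≠ 0 (so A_mA^m = -γ ≠ 0), the Ricci tensor has the quasi-Einstein form R_{kl} = (A_k A_l / A_m A^m)(nγ - R/(n-1)) + g_{kl}(R/(n-1) - γ). -/

import Mathlib

open Finset in
lemma aux_contra {n : ℕ} (g ginv : Fin n → Fin n → ℝ)
    (hgsym : ∀ i j, g i j = g j i)
    (hginv : ∀ i j, ∑ m, g i m * ginv m j = if i = j then (1:ℝ) else 0)
    (v : Fin n → ℝ) (j : Fin n) :
    ∑ m, (∑ p, ginv m p * v p) * g m j = v j := by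
  have h1 : ∀ m, (∑ p, ginv m p * v p) * g m j = ∑ p, g j m * ginv m p * v p := by
    intro m
    rw [Finset.sum_mul]
    exact Finset.sum_congr rfl fun p _ => by rw [hgsym]; ring
  rw [Finset.sum_congr rfl fun m _ => h1 m, Finset.sum_comm]
  have h2 : ∀ p, ∑ m, g j m * ginv m p * v p = (if j = p then (1:ℝ) else 0) * v p := by
    intro p
    rw [← Finset.sum_mul, hginv]
  rw [Finset.sum_congr rfl fun p _ => h2 p]
  simp

open Matrix in
lemma aux_ginv_symm {n : ℕ} (g ginv : Fin n → Fin n → ℝ)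
    (hgsym : ∀ i j, g i j = g j i)
    (hginv : ∀ i j, ∑ m, g i m * ginv m j = if i = j then (1:ℝ) else 0) :
    ∀ i j, ginv i j = ginv j i := by
  let G : Matrix (Fin n) (Fin n) ℝ := Matrix.of g
  let Gi : Matrix (Fin n) (Fin n) ℝ := Matrix.of ginv
  have hGGi : G * Gi = 1 := by
    ext i j
    simp [Matrix.mul_apply, Matrix.one_apply, G, Gi, hginv i j]
  have hGT : Gᵀ = G := by ext i j; simp [G, Matrix.transpose_apply, hgsym i j]
  have h1 : Giᵀ * G = 1 := by
    calc Giᵀ * G = Giᵀ * Gᵀ := by rw [hGT]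
    _ = (G * Gi)ᵀ := by rw [Matrix.transpose_mul]
    _ = 1 := by rw [hGGi]; simp
  have : Giᵀ = Gi := by
    calc Giᵀ = Giᵀ * (G * Gi) := by rw [hGGi]; simp
    _ = (Giᵀ * G) * Gi := by rw [Matrix.mul_assoc]
    _ = Gi := by rw [h1]; simp
  intro i j
  have := congrFun (congrFun this j) i
  simpa [Gi, Matrix.transpose_apply] using this

/-- In a non conformally flat (CQR)_n manifold with concircular
fundamental vector `A` (with constant `γ = -A_mA^m ≠ 0`), the Ricci tensor has the
quasi-Einstein form
`R_{kl} = (A_kA_l/(A_mA^m))(nγ - R/(n-1)) + g_{kl}(R/(n-1) - γ)`.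
(Pointwise statement; the integrability condition of concircularity and the Weyl
tensor formula are supplied as hypotheses.) -/
theorem cqr_concircular_quasi_einstein
    (n : ℕ) (hn : 4 ≤ n)
    (g ginv : Fin n → Fin n → ℝ)
    (hgsym : ∀ i j, g i j = g j i)
    (hginv : ∀ i j, ∑ m, g i m * ginv m j = if i = j then (1:ℝ) else 0)
    (R : Fin n → Fin n → Fin n → Fin n → ℝ)
    (Ric : Fin n → Fin n → ℝ)
    (hRic : ∀ k l, Ric k l = - ∑ m, ∑ p, ginv m p * R m k l p)
    (Rs : ℝ) (hRs : Rs = ∑ k, ∑ l, ginv k l * Ric k l)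
    (C : Fin n → Fin n → Fin n → Fin n → ℝ)
    (hC : ∀ j k l m, C j k l m = R j k l m
      + (1 / ((n:ℝ) - 2)) *
        (g m j * Ric k l - g m k * Ric j l + Ric m j * g k l - Ric m k * g j l)
      - (Rs / (((n:ℝ) - 1) * ((n:ℝ) - 2))) * (g m j * g k l - g m k * g j l))
    (A : Fin n → ℝ) (γ : ℝ) (hγ : γ ≠ 0)
    (hnull : ∑ m, ∑ p, ginv m p * A m * A p = -γ)
    -- integrability condition of concircularity:
    (hint : ∀ j k l, ∑ m, ∑ p, ginv m p * A p * R j k l m =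
      γ * (A k * g j l - A j * g k l))
    (hAC : ∀ j k l, ∑ m, ∑ p, ginv m p * A p * C j k l m = 0) :
    ∀ k l, Ric k l =
      (A k * A l / (∑ m, ∑ p, ginv m p * A m * A p)) * ((n:ℝ) * γ - Rs / ((n:ℝ) - 1))
      + g k l * (Rs / ((n:ℝ) - 1) - γ) := by
  have hsy : ∀ i j, ginv i j = ginv j i := aux_ginv_symm g ginv hgsym hginv
  set c1 : ℝ := (n:ℝ) - 1 with hc1
  set c2 : ℝ := (n:ℝ) - 2 with hc2
  have hn4 : (4:ℝ) ≤ (n:ℝ) := by exact_mod_cast hn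
  have hc1ne : c1 ≠ 0 := by rw [hc1]; nlinarith
  have hc2ne : c2 ≠ 0 := by rw [hc2]; nlinarith
  set up : Fin n → ℝ := fun m => ∑ p, ginv m p * A p with hupdef
  -- basic contractions with up
  have S1 : ∀ j, ∑ m, up m * g m j = A j := fun j => aux_contra g ginv hgsym hginv A j
  have S1' : ∀ j, ∑ m, up m * g j m = A j := by
    intro j
    rw [Finset.sum_congr rfl fun m _ => by rw [hgsym j m]]
    exact S1 j
  have S2 : ∑ m, up m * A m = -γ := by
    rw [← hnull]
    exact Finset.sum_congr rfl fun m _ => by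
      rw [hupdef]; simp only []; rw [Finset.sum_mul]
      exact Finset.sum_congr rfl fun p _ => by ring
  have hint' : ∀ j k l, ∑ m, up m * R j k l m = γ * (A k * g j l - A j * g k l) := by
    intro j k l
    rw [← hint j k l]
    exact Finset.sum_congr rfl fun m _ => by
      rw [hupdef]; simp only []; rw [Finset.sum_mul]
  have hAC' : ∀ j k l, ∑ m, up m * C j k l m = 0 := by
    intro j k l
    rw [← hAC j k l]
    exact Finset.sum_congr rfl fun m _ => by
      rw [hupdef]; simp only []; rw [Finset.sum_mul]
  set B : Fin n → ℝ := fun j => ∑ m, up m * Ric m j with hBdef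
  set D : Fin n → ℝ := fun k => ∑ l, up l * Ric k l with hDdef
  have hB : ∀ j, (∑ m, up m * Ric m j) = B j := fun j => rfl
  have hD : ∀ k, (∑ l, up l * Ric k l) = D k := fun k => rfl
  have star : ∀ j k l, γ * (A k * g j l - A j * g k l)
      + (1/c2) * (A j * Ric k l - A k * Ric j l + B j * g k l - B k * g j l)
      - (Rs/(c1*c2)) * (A j * g k l - A k * g j l) = 0 := by
    intro j k l
    have expand : ∑ m, up m * C j k l m
        = (∑ m, up m * R j k l m)
          + (∑ m, up m * g m j) * ((1/c2) * Ric k l)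
          + (∑ m, up m * g m k) * (-(1/c2) * Ric j l)
          + (∑ m, up m * Ric m j) * ((1/c2) * g k l)
          + (∑ m, up m * Ric m k) * (-(1/c2) * g j l)
          + (∑ m, up m * g m j) * (-(Rs/(c1*c2)) * g k l)
          + (∑ m, up m * g m k) * ((Rs/(c1*c2)) * g j l) := by
      simp only [Finset.sum_mul, ← Finset.sum_add_distrib]
      exact Finset.sum_congr rfl fun m _ => by rw [hC]; ring
    have h0 := hAC' j k l
    rw [expand, hint' j k l, S1 j, S1 k, hB j, hB k] at h0
    -- h0 : γ * (...) + A j * (...) + ... = 0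
    calc γ * (A k * g j l - A j * g k l)
        + (1/c2) * (A j * Ric k l - A k * Ric j l + B j * g k l - B k * g j l)
        - (Rs/(c1*c2)) * (A j * g k l - A k * g j l)
        = γ * (A k * g j l - A j * g k l) + A j * ((1/c2) * Ric k l)
          + A k * (-(1/c2) * Ric j l) + B j * ((1/c2) * g k l)
          + B k * (-(1/c2) * g j l) + A j * (-(Rs/(c1*c2)) * g k l)
          + A k * ((Rs/(c1*c2)) * g j l) := by ring
      _ = 0 := h0
  -- star with denominators cleared
  have star' : ∀ j k l, c1*c2*γ * (A k * g j l - A j * g k l)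
      + c1 * (A j * Ric k l - A k * Ric j l + B j * g k l - B k * g j l)
      - Rs * (A j * g k l - A k * g j l) = 0 := by
    intro j k l
    have e : c1*c2*(γ * (A k * g j l - A j * g k l)
        + (1/c2) * (A j * Ric k l - A k * Ric j l + B j * g k l - B k * g j l)
        - (Rs/(c1*c2)) * (A j * g k l - A k * g j l))
        = c1*c2*γ * (A k * g j l - A j * g k l)
          + c1 * (A j * Ric k l - A k * Ric j l + B j * g k l - B k * g j l)
          - Rs * (A j * g k l - A k * g j l) := by
      field_simp
    rw [← e, star j k l, mul_zero]
  -- contraction helpers over ginv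
  have T0 : ∑ j, ∑ l, ginv j l * g j l = (n:ℝ) := by
    have h1 : ∀ j : Fin n, ∑ l, ginv j l * g j l = 1 := by
      intro j
      have : ∀ l, ginv j l * g j l = g j l * ginv l j := fun l => by rw [hsy j l]; ring
      rw [Finset.sum_congr rfl fun l _ => this l, hginv j j]
      simp
    rw [Finset.sum_congr rfl fun j _ => h1 j]
    simp [Finset.card_univ]
  have T2v : ∀ (v : Fin n → ℝ) (k), ∑ j, ∑ l, ginv j l * (v j * g k l) = v k := by
    intro v k
    have h1 : ∀ j : Fin n, ∑ l, ginv j l * (v j * g k l) = v j * (if k = j then (1:ℝ) else 0) := by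
      intro j
      have : ∀ l, ginv j l * (v j * g k l) = g k l * ginv l j * v j := fun l => by
        rw [hsy j l]; ring
      rw [Finset.sum_congr rfl fun l _ => this l, ← Finset.sum_mul, hginv k j]
      ring
    rw [Finset.sum_congr rfl fun j _ => h1 j]
    simp
  have T3f : ∀ (f : Fin n → ℝ), ∑ j, ∑ l, ginv j l * (A j * f l) = ∑ l, up l * f l := by
    intro f
    rw [Finset.sum_comm]
    apply Finset.sum_congr rfl
    intro l _
    rw [hupdef]
    simp only []
    rw [Finset.sum_mul]
    exact Finset.sum_congr rfl fun j _ => by rw [hsy j l]; ring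
  have hnull' : ∑ k, ∑ l, ginv k l * (A k * A l) = -γ := by
    rw [← hnull]
    exact Finset.sum_congr rfl fun k _ => Finset.sum_congr rfl fun l _ => by ring
  -- trace of star' over j,l  ⟹  D k = c1 * B k - γ*c1*c2 * A k
  have hDk : ∀ k, D k = c1 * B k - γ*c1*c2 * A k := by
    intro k
    have h0 : ∑ j, ∑ l, ginv j l * (c1*c2*γ * (A k * g j l - A j * g k l)
        + c1 * (A j * Ric k l - A k * Ric j l + B j * g k l - B k * g j l)
        - Rs * (A j * g k l - A k * g j l)) = 0 :=
      Finset.sum_eq_zero fun j _ => Finset.sum_eq_zero fun l _ => by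
        rw [star' j k l, mul_zero]
    have h1 : ∀ j l, ginv j l * (c1*c2*γ * (A k * g j l - A j * g k l)
        + c1 * (A j * Ric k l - A k * Ric j l + B j * g k l - B k * g j l)
        - Rs * (A j * g k l - A k * g j l))
        = (ginv j l * g j l) * (c1*c2*γ*A k - c1*B k + Rs*A k)
          + (ginv j l * (A j * g k l)) * (-(c1*c2*γ) - Rs)
          + (ginv j l * (A j * Ric k l)) * c1
          + (ginv j l * Ric j l) * (-(c1*A k))
          + (ginv j l * (B j * g k l)) * c1 := fun j l => by ring
    rw [Finset.sum_congr rfl fun j _ => Finset.sum_congr rfl fun l _ => h1 j l] at h0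
    simp only [Finset.sum_add_distrib, ← Finset.sum_mul] at h0
    rw [T0, T2v A k, T2v B k, T3f (Ric k), hD k, ← hRs] at h0
    apply mul_left_cancel₀ hc1ne
    rw [hc1, hc2] at h0 ⊢
    linear_combination h0
  -- contraction of star' with up over l  ⟹  A j * B k = A k * B j
  have hAB : ∀ j k, A j * B k = A k * B j := by
    intro j k
    have h0 : ∑ l, up l * (c1*c2*γ * (A k * g j l - A j * g k l)
        + c1 * (A j * Ric k l - A k * Ric j l + B j * g k l - B k * g j l)
        - Rs * (A j * g k l - A k * g j l)) = 0 :=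
      Finset.sum_eq_zero fun l _ => by rw [star' j k l, mul_zero]
    have h1 : ∀ l, up l * (c1*c2*γ * (A k * g j l - A j * g k l)
        + c1 * (A j * Ric k l - A k * Ric j l + B j * g k l - B k * g j l)
        - Rs * (A j * g k l - A k * g j l))
        = (up l * g j l) * (c1*c2*γ*A k - c1*B k + Rs*A k)
          + (up l * g k l) * (-(c1*c2*γ*A j) + c1*B j - Rs*A j)
          + (up l * Ric k l) * (c1*A j)
          + (up l * Ric j l) * (-(c1*A k)) := fun l => by ring
    rw [Finset.sum_congr rfl fun l _ => h1 l] at h0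
    simp only [Finset.sum_add_distrib, ← Finset.sum_mul] at h0
    rw [S1' j, S1' k, hD k, hD j, hDk k, hDk j] at h0
    apply mul_left_cancel₀ hc2ne
    apply mul_left_cancel₀ hc1ne
    rw [hc1, hc2] at h0 ⊢
    linear_combination h0
  -- A is not identically zero
  obtain ⟨j0, hj0⟩ : ∃ j0, A j0 ≠ 0 := by
    by_contra h
    push_neg at h
    rw [Finset.sum_eq_zero (fun m _ => Finset.sum_eq_zero fun p _ => by rw [h p]; ring)] at hnull
    exact hγ (by linarith)
  -- B is proportional to A
  set μ : ℝ := B j0 / A j0 with hμdef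
  have hμ : ∀ k, B k = μ * A k := by
    intro k
    rw [hμdef, div_mul_eq_mul_div, eq_div_iff hj0]
    linear_combination hAB j0 k
  set SuB : ℝ := ∑ j, up j * B j with hSuBdef
  have hSuB : SuB = μ * (-γ) := by
    rw [hSuBdef, ← S2, Finset.mul_sum]
    exact Finset.sum_congr rfl fun j _ => by rw [hμ j]; ring
  -- contraction of star' with up over j
  have hE0 : ∀ k l, -(γ*c1*Ric k l) + (c1*c2*γ + Rs - 2*c1*μ) * (A k * A l)
      + (γ*γ*c1*c2 + γ*Rs - γ*μ*c1) * g k l = 0 := by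
    intro k l
    have h0 : ∑ j, up j * (c1*c2*γ * (A k * g j l - A j * g k l)
        + c1 * (A j * Ric k l - A k * Ric j l + B j * g k l - B k * g j l)
        - Rs * (A j * g k l - A k * g j l)) = 0 :=
      Finset.sum_eq_zero fun j _ => by rw [star' j k l, mul_zero]
    have h1 : ∀ j, up j * (c1*c2*γ * (A k * g j l - A j * g k l)
        + c1 * (A j * Ric k l - A k * Ric j l + B j * g k l - B k * g j l)
        - Rs * (A j * g k l - A k * g j l))
        = (up j * g j l) * (c1*c2*γ*A k - c1*B k + Rs*A k)
          + (up j * A j) * (-(c1*c2*γ*g k l) + c1*Ric k l - Rs*g k l)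
          + (up j * Ric j l) * (-(c1*A k))
          + (up j * B j) * (c1*g k l) := fun j => by ring
    rw [Finset.sum_congr rfl fun j _ => h1 j] at h0
    simp only [Finset.sum_add_distrib, ← Finset.sum_mul] at h0
    rw [S1 l, S2, hB l, ← hSuBdef, hSuB, hμ k, hμ l] at h0
    linear_combination h0
  -- trace of hE0 fixes μ = c1 * γ
  have hμval : μ = c1 * γ := by
    have h0 : ∑ k, ∑ l, ginv k l * (-(γ*c1*Ric k l) + (c1*c2*γ + Rs - 2*c1*μ) * (A k * A l)
        + (γ*γ*c1*c2 + γ*Rs - γ*μ*c1) * g k l) = 0 :=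
      Finset.sum_eq_zero fun k _ => Finset.sum_eq_zero fun l _ => by
        rw [hE0 k l, mul_zero]
    have h1 : ∀ k l, ginv k l * (-(γ*c1*Ric k l) + (c1*c2*γ + Rs - 2*c1*μ) * (A k * A l)
        + (γ*γ*c1*c2 + γ*Rs - γ*μ*c1) * g k l)
        = (ginv k l * Ric k l) * (-(γ*c1))
          + (ginv k l * (A k * A l)) * (c1*c2*γ + Rs - 2*c1*μ)
          + (ginv k l * g k l) * (γ*γ*c1*c2 + γ*Rs - γ*μ*c1) := fun k l => by ring
    rw [Finset.sum_congr rfl fun k _ => Finset.sum_congr rfl fun l _ => h1 k l] at h0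
    simp only [Finset.sum_add_distrib, ← Finset.sum_mul] at h0
    rw [T0, hnull', ← hRs] at h0
    have hγc : γ * c1 * c2 ≠ 0 := by
      exact mul_ne_zero (mul_ne_zero hγ hc1ne) hc2ne
    apply mul_left_cancel₀ hγc
    rw [hc1, hc2] at h0 ⊢
    linear_combination -h0
  -- conclusion
  intro k l
  rw [hnull]
  have h := hE0 k l
  rw [hμval] at h
  have hγc1 : γ * c1 ≠ 0 := mul_ne_zero hγ hc1ne
  field_simp
  rw [hc1, hc2] at h
  linear_combination (-1:ℝ) * h
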